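/- For a Conway operator on a Cartesian differential category, the following are equivalent: (i) the differential-fixpoint rule D[fix(f)] = π₂ ∘ fix(T(f)∘c); (ii) the tangent-fixpoint rule T(fix(f)) = fix(T(f)∘c); (iii) the strong differential-fixpoint rule D[fix(f)] = fix( D[f] ∘ ⟨π₁, fix(f)∘π₁, π₂, π₃⟩ ). -/

import Mathlib

open CategoryTheory CategoryTheory.Limits

universe v u

variable (C : Type u) [Category.{v} C] [HasFiniteProducts C]

/-- Cartesian left additive category: hom-sets are commutative monoids,
precomposition is additive, and the projections are additive maps. -/
class CartesianLeftAdditive [∀ A B : C, AddCommMonoid (A ⟶ B)] : Prop where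
  comp_add : ∀ {X A B : C} (x : X ⟶ A) (f g : A ⟶ B), x ≫ (f + g) = x ≫ f + x ≫ g
  comp_zero : ∀ {X A B : C} (x : X ⟶ A), x ≫ (0 : A ⟶ B) = 0
  add_comp_fst : ∀ {X A B : C} (x y : X ⟶ A ⨯ B),
    (x + y) ≫ (prod.fst : A ⨯ B ⟶ A) = x ≫ prod.fst + y ≫ prod.fst
  add_comp_snd : ∀ {X A B : C} (x y : X ⟶ A ⨯ B),
    (x + y) ≫ (prod.snd : A ⨯ B ⟶ B) = x ≫ prod.snd + y ≫ prod.snd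
  zero_comp_fst : ∀ {X A B : C}, (0 : X ⟶ A ⨯ B) ≫ (prod.fst : A ⨯ B ⟶ A) = 0
  zero_comp_snd : ∀ {X A B : C}, (0 : X ⟶ A ⨯ B) ≫ (prod.snd : A ⨯ B ⟶ B) = 0

/-- A differential combinator satisfying the axioms [CD.1]-[CD.7] of a
Cartesian differential category. -/
structure DiffComb [∀ A B : C, AddCommMonoid (A ⟶ B)] where
  D : ∀ {A B : C}, (A ⟶ B) → (A ⨯ A ⟶ B)
  cd1_zero : ∀ {A B : C}, D (0 : A ⟶ B) = 0
  cd1_add : ∀ {A B : C} (f g : A ⟶ B), D (f + g) = D f + D g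
  cd2_zero : ∀ {A B X : C} (f : A ⟶ B) (x : X ⟶ A), prod.lift x 0 ≫ D f = 0
  cd2_add : ∀ {A B X : C} (f : A ⟶ B) (x y z : X ⟶ A),
    prod.lift x (y + z) ≫ D f = prod.lift x y ≫ D f + prod.lift x z ≫ D f
  cd3_id : ∀ {A : C}, D (𝟙 A) = prod.snd
  cd3_fst : ∀ {A B : C},
    D (prod.fst : A ⨯ B ⟶ A) = (prod.snd : (A ⨯ B) ⨯ (A ⨯ B) ⟶ A ⨯ B) ≫ prod.fst
  cd3_snd : ∀ {A B : C},
    D (prod.snd : A ⨯ B ⟶ B) = (prod.snd : (A ⨯ B) ⨯ (A ⨯ B) ⟶ A ⨯ B) ≫ prod.snd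
  cd4 : ∀ {A B B' : C} (f : A ⟶ B) (g : A ⟶ B'), D (prod.lift f g) = prod.lift (D f) (D g)
  cd5 : ∀ {A B E : C} (f : A ⟶ B) (g : B ⟶ E), D (f ≫ g) = prod.lift (prod.fst ≫ f) (D f) ≫ D g
  cd6 : ∀ {A B X : C} (f : A ⟶ B) (x y z : X ⟶ A),
    prod.lift (prod.lift x y) (prod.lift 0 z) ≫ D (D f) = prod.lift x z ≫ D f
  cd7 : ∀ {A B X : C} (f : A ⟶ B) (x y z : X ⟶ A),
    prod.lift (prod.lift x y) (prod.lift z 0) ≫ D (D f) =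
      prod.lift (prod.lift x z) (prod.lift y 0) ≫ D (D f)

variable {C}

/-- The tangent bundle functor on maps: `T f = ⟨f ∘ π₁, D[f]⟩`. -/
noncomputable def DiffComb.T [∀ A B : C, AddCommMonoid (A ⟶ B)] (Dc : DiffComb C) {A B : C}
    (f : A ⟶ B) : A ⨯ A ⟶ B ⨯ B :=
  prod.lift (prod.fst ≫ f) (Dc.D f)

/-- The canonical middle-swap isomorphism `c = ⟨π₁,π₃,π₂,π₄⟩`. -/
noncomputable def cmap (A B X Y : C) : (A ⨯ B) ⨯ (X ⨯ Y) ⟶ (A ⨯ X) ⨯ (B ⨯ Y) :=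
  prod.lift (prod.map prod.fst prod.fst) (prod.map prod.snd prod.snd)

/-- A parametrized fixpoint operator. -/
structure ParamFix (C : Type u) [Category.{v} C] [HasFiniteProducts C] where
  fix : ∀ {A X : C}, (A ⨯ X ⟶ X) → (A ⟶ X)
  fix_eq : ∀ {A X : C} (f : A ⨯ X ⟶ X), prod.lift (𝟙 A) (fix f) ≫ f = fix f
  natural : ∀ {A B X : C} (g : A ⟶ B) (f : B ⨯ X ⟶ X),
    g ≫ fix f = fix (prod.map g (𝟙 X) ≫ f)

/-- The associativity map `(A ⨯ X) ⨯ Y ⟶ A ⨯ (X ⨯ Y)`. -/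
noncomputable def assoc3 (A X Y : C) : (A ⨯ X) ⨯ Y ⟶ A ⨯ (X ⨯ Y) :=
  prod.lift (prod.fst ≫ prod.fst) (prod.lift (prod.fst ≫ prod.snd) prod.snd)

/-- A Conway operator: a parametrized fixpoint operator satisfying
dinaturality and Bekič's axiom. -/
structure Conway (C : Type u) [Category.{v} C] [HasFiniteProducts C]
    extends ParamFix C where
  dinat : ∀ {A X Y : C} (f : A ⨯ X ⟶ Y) (g : Y ⟶ X),
    fix (f ≫ g) = fix (prod.map (𝟙 A) g ≫ f) ≫ g
  bekic : ∀ {A X Y : C} (f : A ⨯ (X ⨯ Y) ⟶ X) (g : A ⨯ (X ⨯ Y) ⟶ Y),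
    fix (prod.lift f g) =
      prod.lift
        (fix (prod.lift (𝟙 (A ⨯ X)) (fix (assoc3 A X Y ≫ g)) ≫ assoc3 A X Y ≫ f))
        (fix (prod.lift (prod.fst : A ⨯ Y ⟶ A)
          (prod.lift
            ((prod.fst : A ⨯ Y ⟶ A) ≫
              fix (prod.lift (𝟙 (A ⨯ X)) (fix (assoc3 A X Y ≫ g)) ≫ assoc3 A X Y ≫ f))
            (prod.snd : A ⨯ Y ⟶ Y)) ≫ g))

section
variable [∀ A B : C, AddCommMonoid (A ⟶ B)]

/-- The differential-fixpoint rule. -/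
def DiffFixRule (Dc : DiffComb C) (P : ParamFix C) : Prop :=
  ∀ {A X : C} (f : A ⨯ X ⟶ X),
    Dc.D (P.fix f) = P.fix (cmap A A X X ≫ Dc.T f) ≫ prod.snd

/-- The tangent-fixpoint rule. -/
def TangentFixRule (Dc : DiffComb C) (P : ParamFix C) : Prop :=
  ∀ {A X : C} (f : A ⨯ X ⟶ X),
    Dc.T (P.fix f) = P.fix (cmap A A X X ≫ Dc.T f)

/-- The strong differential-fixpoint rule. -/
def StrongDiffFixRule (Dc : DiffComb C) (P : ParamFix C) : Prop :=
  ∀ {A X : C} (f : A ⨯ X ⟶ X),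
    Dc.D (P.fix f) =
      P.fix (prod.lift
        (prod.lift ((prod.fst : (A ⨯ A) ⨯ X ⟶ A ⨯ A) ≫ prod.fst)
          ((prod.fst : (A ⨯ A) ⨯ X ⟶ A ⨯ A) ≫ prod.fst ≫ P.fix f))
        (prod.lift ((prod.fst : (A ⨯ A) ⨯ X ⟶ A ⨯ A) ≫ prod.snd)
          (prod.snd : (A ⨯ A) ⨯ X ⟶ X)) ≫ Dc.D f)

/-- Key Bekič computation: the fixpoint of `c ≫ T f` decomposes. -/
lemma fix_cmap_T (Dc : DiffComb C) (Cw : Conway C) {A X : C} (f : A ⨯ X ⟶ X) :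
    Cw.fix (cmap A A X X ≫ Dc.T f) =
      prod.lift (prod.fst ≫ Cw.fix f)
        (Cw.fix (prod.lift
          (prod.lift ((prod.fst : (A ⨯ A) ⨯ X ⟶ A ⨯ A) ≫ prod.fst)
            ((prod.fst : (A ⨯ A) ⨯ X ⟶ A ⨯ A) ≫ prod.fst ≫ Cw.fix f))
          (prod.lift ((prod.fst : (A ⨯ A) ⨯ X ⟶ A ⨯ A) ≫ prod.snd)
            (prod.snd : (A ⨯ A) ⨯ X ⟶ X)) ≫ Dc.D f)) := by
  have hsplit : cmap A A X X ≫ Dc.T f =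
      prod.lift (prod.map prod.fst prod.fst ≫ f) (cmap A A X X ≫ Dc.D f) := by
    simp [cmap, DiffComb.T, prod.comp_lift, prod.lift_fst, prod.lift_snd, prod.lift_fst_assoc, prod.lift_snd_assoc]
  rw [hsplit, Cw.bekic]
  have e0 : ∀ (m : (A ⨯ A) ⨯ X ⟶ X),
      prod.lift (𝟙 ((A ⨯ A) ⨯ X)) m ≫ assoc3 (A ⨯ A) X X ≫ prod.map prod.fst prod.fst ≫ f
        = prod.map prod.fst (𝟙 X) ≫ f := by
    intro m
    rw [← Category.assoc, ← Category.assoc]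
    congr 1
    apply Limits.prod.hom_ext <;> simp [assoc3, prod.lift_fst, prod.lift_snd, prod.lift_fst_assoc, prod.lift_snd_assoc]
  have eq1 : Cw.fix (prod.lift (𝟙 ((A ⨯ A) ⨯ X))
        (Cw.fix (assoc3 (A ⨯ A) X X ≫ (cmap A A X X ≫ Dc.D f))) ≫
        assoc3 (A ⨯ A) X X ≫ prod.map prod.fst prod.fst ≫ f)
      = prod.fst ≫ Cw.fix f := by
    rw [e0, ← Cw.natural]
  rw [eq1]
  congr 2
  rw [← Category.assoc]
  congr 1
  apply Limits.prod.hom_ext <;> apply Limits.prod.hom_ext <;> simp [cmap, prod.lift_fst, prod.lift_snd, prod.lift_fst_assoc, prod.lift_snd_assoc]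
/-- for a Conway operator on a Cartesian differential category,
the differential-fixpoint rule, the tangent-fixpoint rule and the strong
differential-fixpoint rule are all equivalent. -/
theorem conway_rules_equivalent [CartesianLeftAdditive C]
    (Dc : DiffComb C) (Cw : Conway C) :
    (DiffFixRule Dc Cw.toParamFix ↔ TangentFixRule Dc Cw.toParamFix) ∧
    (TangentFixRule Dc Cw.toParamFix ↔ StrongDiffFixRule Dc Cw.toParamFix) := by
  have hfst : ∀ {A X : C} (f : A ⨯ X ⟶ X),
      Cw.fix (cmap A A X X ≫ Dc.T f) ≫ prod.fst = prod.fst ≫ Cw.fix f := by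
    intro A X f; rw [fix_cmap_T Dc Cw f, prod.lift_fst]
  -- DiffFixRule ↔ StrongDiffFixRule
  have hDS : DiffFixRule Dc Cw.toParamFix ↔ StrongDiffFixRule Dc Cw.toParamFix := by
    unfold DiffFixRule StrongDiffFixRule
    constructor
    · intro h A X f; rw [h f, fix_cmap_T Dc Cw f, prod.lift_snd]
    · intro h A X f; rw [h f, fix_cmap_T Dc Cw f, prod.lift_snd]
  -- TangentFixRule ↔ StrongDiffFixRule
  have hTS : TangentFixRule Dc Cw.toParamFix ↔ StrongDiffFixRule Dc Cw.toParamFix := by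
    unfold TangentFixRule StrongDiffFixRule
    constructor
    · intro h A X f
      have h2 : Dc.T (Cw.fix f) ≫ prod.snd = Dc.D (Cw.fix f) := by
        simp [DiffComb.T, prod.lift_fst, prod.lift_snd, prod.lift_fst_assoc, prod.lift_snd_assoc]
      rw [← h2, h f, fix_cmap_T Dc Cw f, prod.lift_snd]
    · intro h A X f
      rw [fix_cmap_T Dc Cw f]
      unfold DiffComb.T
      rw [h f]
  exact ⟨hDS.trans hTS.symm, hTS⟩

end
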